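/- Consider the directed graph D on the six vertices {u, u', b, c, v', v} whose arcs are exactly (u,u'), (u',u), (v,v'), (v',v), (u',b), (v',b), (b,c), (c,u'), (c,v'). Then: (i) every directed walk from u to v in D (a nonempty list of vertices starting at u, ending at v, with every consecutive pair an arc of D) contains the arc (b,c) as a consecutive pair; (ii) every directed walk from v to u in D contains the arc (b,c) as a consecutive pair; consequently (iii) there do not exist a directed walk from u to v and a directed walk from v to u in D that are arc-disjoint, i.e. that share no common consecutive ordered pair of vertices. -/
import Mathlib


/-- The six vertices of the arc gadget replacing an undirected edge `uv` in the reduction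
from Edge-Disjoint Paths to System Optimum Atomic Congestion with unit capacities. -/
inductive GadgetVert : Type
  | u | u' | b | c | v' | v
  deriving DecidableEq

open GadgetVert

/-- The arcs of the gadget digraph `D`. -/
def GadgetArc : GadgetVert → GadgetVert → Prop := fun x y =>
  (x = u ∧ y = u') ∨ (x = u' ∧ y = u) ∨ (x = v ∧ y = v') ∨ (x = v' ∧ y = v) ∨
  (x = u' ∧ y = b) ∨ (x = v' ∧ y = b) ∨ (x = b ∧ y = c) ∨
  (x = c ∧ y = u') ∨ (x = c ∧ y = v')

lemma gadget_key (S : GadgetVert → Prop)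
    (hS : ∀ x y, S x → GadgetArc x y → (x = b ∧ y = c) ∨ S y) :
    ∀ w : List GadgetVert, List.Chain' GadgetArc w →
      ∀ x, w.head? = some x → S x → ¬ ([b, c] <:+: w) →
      ∀ z, w.getLast? = some z → S z := by
  intro w
  induction w with
  | nil => intro _ x hx; simp at hx
  | cons a t ih =>
    intro hch x hx hSx hinf z hz
    simp at hx; subst hx
    cases t with
    | nil => simp at hz; subst hz; exact hSx
    | cons y r =>
      have harc : GadgetArc a y := (List.isChain_cons_cons.mp hch).1
      have hch' : List.Chain' GadgetArc (y :: r) := (List.isChain_cons_cons.mp hch).2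
      rcases hS a y hSx harc with ⟨hb, hc⟩ | hSy
      · exact absurd ⟨[], r, by simp [hb, hc]⟩ hinf
      · have hinf' : ¬ ([b, c] <:+: (y :: r)) := fun h =>
          hinf (h.trans (List.suffix_cons a (y :: r)).isInfix)
        have hz' : (y :: r).getLast? = some z := by
          rw [List.getLast?_cons_cons] at hz; exact hz
        exact ih hch' y rfl hSy hinf' z hz'

lemma gadget_uv : ∀ w : List GadgetVert, w ≠ [] → w.head? = some u → w.getLast? = some v →
    List.Chain' GadgetArc w → [b, c] <:+: w := by
  intro w hne hh hl hch
  by_contra hinf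
  have := gadget_key (fun x => x = u ∨ x = u' ∨ x = b)
    (by intro x y hx harc; unfold GadgetArc at harc; rcases hx with h|h|h <;> subst h <;>
        rcases harc with ⟨h1,h2⟩|⟨h1,h2⟩|⟨h1,h2⟩|⟨h1,h2⟩|⟨h1,h2⟩|⟨h1,h2⟩|⟨h1,h2⟩|⟨h1,h2⟩|⟨h1,h2⟩ <;>
        simp_all)
    w hch u hh (Or.inl rfl) hinf v hl
  simp at this

lemma gadget_vu : ∀ w : List GadgetVert, w ≠ [] → w.head? = some v → w.getLast? = some u →
    List.Chain' GadgetArc w → [b, c] <:+: w := by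
  intro w hne hh hl hch
  by_contra hinf
  have := gadget_key (fun x => x = v ∨ x = v' ∨ x = b)
    (by intro x y hx harc; unfold GadgetArc at harc; rcases hx with h|h|h <;> subst h <;>
        rcases harc with ⟨h1,h2⟩|⟨h1,h2⟩|⟨h1,h2⟩|⟨h1,h2⟩|⟨h1,h2⟩|⟨h1,h2⟩|⟨h1,h2⟩|⟨h1,h2⟩|⟨h1,h2⟩ <;>
        simp_all)
    w hch v hh (Or.inl rfl) hinf u hl
  simp at this

/-- (i) Every directed walk from `u` to `v` in the gadget `D` uses the arc `(b, c)`;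
(ii) every directed walk from `v` to `u` in `D` uses the arc `(b, c)`; consequently
(iii) there is no pair of arc-disjoint directed walks from `u` to `v` and from `v` to `u`. -/
theorem stmt_5 :
    (∀ w : List GadgetVert, w ≠ [] → w.head? = some u → w.getLast? = some v →
      List.Chain' GadgetArc w → [b, c] <:+: w) ∧
    (∀ w : List GadgetVert, w ≠ [] → w.head? = some v → w.getLast? = some u →
      List.Chain' GadgetArc w → [b, c] <:+: w) ∧
    ¬ ∃ w₁ w₂ : List GadgetVert,
      (w₁ ≠ [] ∧ w₁.head? = some u ∧ w₁.getLast? = some v ∧ List.Chain' GadgetArc w₁) ∧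
      (w₂ ≠ [] ∧ w₂.head? = some v ∧ w₂.getLast? = some u ∧ List.Chain' GadgetArc w₂) ∧
      (∀ x y : GadgetVert, ¬([x, y] <:+: w₁ ∧ [x, y] <:+: w₂)) := by
  refine ⟨gadget_uv, gadget_vu, ?_⟩
  rintro ⟨w₁, w₂, ⟨h1, h2, h3, h4⟩, ⟨h5, h6, h7, h8⟩, hdisj⟩
  exact hdisj b c ⟨gadget_uv w₁ h1 h2 h3 h4, gadget_vu w₂ h5 h6 h7 h8⟩
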